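/- If a canonical linear-probing assignment can (induced by hash function h and arbitrary per-cell total priority orders) is linear, then it obeys the age rule on adjacent occupied cells: for any state q and keys u, v with can(q)[i] = some u and can(q)[i+1] = some v where h(v) ≠ i+1, it holds that rank(u, i) ≥ rank(v, i). -/

import Mathlib

/-- The rank of `v` at cell `i`: the cyclic distance `(i - h v) mod m`. -/
def rnk {U : Type*} {m : ℕ} (h : U → Fin m) (v : U) (i : Fin m) : ℕ :=
  ((i : ℕ) + m - (h v : ℕ)) % m

/-- Cyclic distance from `a` to `b`, going forward, modulo `m`. -/
def cdist {m : ℕ} (a b : Fin m) : ℕ :=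
  ((b : ℕ) + m - (a : ℕ)) % m

/-- A per-cell priority `p` extended to `Option U`: `none` is below everything. -/
def oGTp {U : Type*} {m : ℕ} (p : Fin m → U → U → Prop) (i : Fin m) :
    Option U → Option U → Prop
  | some a, some b => p i a b
  | some _, none => True
  | none, _ => False

/-- The generalized ordering invariant for linear probing with per-cell priorities `p`. -/
def GenInv {U : Type*} {m : ℕ} (p : Fin m → U → U → Prop) (h : U → Fin m)
    (A : Fin m → Option U) : Prop :=
  ∀ i v, A i = some v → ∀ j, cdist (h v) j < cdist (h v) i →
    oGTp p j (A j) (some v) ∨ A j = some v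

/-- The multiset of elements stored in the table `A` (counted with multiplicity). -/
def elemsOf {U : Type*} {m : ℕ} (A : Fin m → Option U) : Multiset U :=
  ((List.ofFn A).filterMap id : List U)

set_option linter.unusedSectionVars false

namespace AgeAux

section FinLemmas
variable {m : ℕ} [NeZero m]

lemma cdist_eq (a b : Fin m) : cdist a b = ((b - a : Fin m) : ℕ) := by
  rw [Fin.sub_def, cdist]; congr 1; omega

lemma cdist_lt (a b : Fin m) : cdist a b < m := by
  have := (b-a).isLt; rw [cdist_eq]; exact this

lemma cdist_self (a : Fin m) : cdist a a = 0 := by simp [cdist_eq]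

lemma cdist_inj {a b c : Fin m} (h : cdist a b = cdist a c) : b = c := by
  rw [cdist_eq, cdist_eq] at h
  exact sub_left_injective (Fin.val_injective h)

lemma fone_ne_zero (hm : 2 ≤ m) : (1 : Fin m) ≠ 0 := by
  intro hh
  have := congrArg Fin.val hh
  rw [Fin.val_one'] at this
  simp [Nat.mod_eq_of_lt (by omega : 1 < m)] at this

lemma fsucc_ne (hm : 2 ≤ m) (a : Fin m) : a + 1 ≠ a := by
  simp [fone_ne_zero hm]

lemma fpred_ne (hm : 2 ≤ m) (a : Fin m) : a - 1 ≠ a := by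
  intro hh
  have h2 : a = a + 1 := by
    nth_rewrite 1 [← sub_add_cancel a 1]; rw [hh]
  exact fsucc_ne hm a h2.symm

lemma fpred_ne_succ (hm : 3 ≤ m) (a : Fin m) : a - 1 ≠ a + 1 := by
  intro hh
  have h2 : a = a + 1 + 1 := by
    nth_rewrite 1 [← sub_add_cancel a 1]; rw [hh]
  rw [add_assoc] at h2
  have h3 : (1 + 1 : Fin m) = 0 := add_eq_left.mp h2.symm
  have := congrArg Fin.val h3
  rw [Fin.add_def, Fin.val_one'] at this
  rw [Nat.mod_eq_of_lt (by omega : 1 < m)] at this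
  simp [Nat.mod_eq_of_lt (by omega : 1+1 < m)] at this

lemma val_add_one_of {x : Fin m} (hx : x + 1 ≠ 0) :
    ((x + 1 : Fin m) : ℕ) = (x : ℕ) + 1 := by
  have h1 : ((x + 1 : Fin m) : ℕ) = ((x : ℕ) + 1) % m := by
    rw [Fin.add_def, Fin.val_one']
    conv_rhs => rw [Nat.add_mod]
    rw [Nat.mod_eq_of_lt x.isLt]
  rcases lt_or_eq_of_le (Nat.succ_le_of_lt x.isLt) with hlt | heq
  · rw [h1, Nat.mod_eq_of_lt hlt]
  · exfalso; apply hx; apply Fin.ext; rw [h1]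
    rw [show (x:ℕ)+1 = m by omega]; simp

lemma cdist_succ {a b : Fin m} (hne : b + 1 ≠ a) :
    cdist a (b + 1) = cdist a b + 1 := by
  rw [cdist_eq, cdist_eq]
  have h : b + 1 - a = (b - a) + 1 := add_sub_right_comm b 1 a
  rw [h]
  exact val_add_one_of (by rw [← h]; simpa [sub_eq_zero] using hne)

lemma cdist_le_one {a b : Fin m} (hm : 2 ≤ m) (h : cdist a b ≤ 1) :
    b = a ∨ b = a + 1 := by
  rw [cdist_eq] at h
  interval_cases hv : ((b - a : Fin m) : ℕ)
  · left; have : b - a = 0 := Fin.ext (by simpa using hv)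
    simpa [sub_eq_zero] using this
  · right
    have : b - a = 1 :=
      Fin.ext (by rw [hv, Fin.val_one', Nat.mod_eq_of_lt (by omega : 1 < m)])
    rw [sub_eq_iff_eq_add] at this
    rw [this, add_comm]

lemma cdist_pred_max (hm : 2 ≤ m) (a : Fin m) : cdist a (a - 1) = m - 1 := by
  rw [cdist_eq]
  have : a - 1 - a = -1 := by abel
  rw [this]
  obtain ⟨k, rfl⟩ : ∃ k, m = k + 1 := ⟨m - 1, by omega⟩
  simp [Fin.coe_neg_one]

end FinLemmas

section StoreLemmas
variable {U : Type*} [DecidableEq U] {m : ℕ} [NeZero m]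
  {A : Fin m → Option U} {q : Finset U}

lemma mem_of_cell (hstore : elemsOf A = q.val) {i : Fin m} {a : U}
    (hA : A i = some a) : a ∈ q := by
  have : a ∈ elemsOf A := by
    show a ∈ ((List.ofFn A).filterMap id : List U)
    rw [List.mem_filterMap]
    exact ⟨some a, List.mem_ofFn.mpr ⟨i, hA⟩, rfl⟩
  rw [hstore] at this
  exact this

lemma exists_cell (hstore : elemsOf A = q.val) {a : U} (ha : a ∈ q) :
    ∃ i, A i = some a := by
  have : a ∈ elemsOf A := by rw [hstore]; exact ha
  have : a ∈ ((List.ofFn A).filterMap id : List U) := this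
  rw [List.mem_filterMap] at this
  obtain ⟨o, ho, hid⟩ := this
  obtain ⟨i, hi⟩ := List.mem_ofFn.mp ho
  exact ⟨i, by rw [hi]; exact hid⟩

lemma cell_inj (hstore : elemsOf A = q.val) {i j : Fin m} {a : U}
    (hi : A i = some a) (hj : A j = some a) : i = j := by
  by_contra hne
  have hdup : (List.ofFn A).Duplicate (some a) := by
    rw [List.duplicate_iff_exists_distinct_get]
    rcases lt_or_gt_of_ne (fun hh : (i:ℕ) = (j:ℕ) => hne (Fin.ext hh)) with hlt | hlt
    · exact ⟨⟨i, by simp⟩, ⟨j, by simp⟩, by simpa using hlt,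
        by simp [List.get_ofFn, hi], by simp [List.get_ofFn, hj]⟩
    · exact ⟨⟨j, by simp⟩, ⟨i, by simp⟩, by simpa using hlt,
        by simp [List.get_ofFn, hj], by simp [List.get_ofFn, hi]⟩
  have hsub : List.Sublist [some a, some a] (List.ofFn A) :=
    List.duplicate_iff_sublist.mp hdup
  have hsub2 : List.Sublist [a, a] ((List.ofFn A).filterMap id) := by
    have := hsub.filterMap id
    simpa using this
  have hdup2 : ((List.ofFn A).filterMap id).Duplicate a :=
    List.duplicate_iff_sublist.mpr hsub2
  have hnd : ((List.ofFn A).filterMap id).Nodup := by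
    have : (((List.ofFn A).filterMap id : List U) : Multiset U).Nodup := by
      rw [show (((List.ofFn A).filterMap id : List U) : Multiset U) = elemsOf A from rfl,
        hstore]
      exact q.nodup
    exact (Multiset.coe_nodup).mp this
  exact (List.nodup_iff_forall_not_duplicate.mp hnd a) hdup2

lemma length_filterMap_of_all_some (l : List (Option U))
    (hl : ∀ o ∈ l, o ≠ none) : (l.filterMap id).length = l.length := by
  induction l with
  | nil => simp
  | cons o t ih =>
    cases o with
    | none => exact absurd rfl (hl none (by simp))
    | some b =>
      simp [List.filterMap_cons, ih (fun o ho => hl o (by simp [ho]))]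
      intro a ha; have := hl a (by simp [ha]); cases a <;> simp_all

lemma exists_empty_cell (hstore : elemsOf A = q.val) (hcard : q.card < m) :
    ∃ j, A j = none := by
  by_contra hno
  push_neg at hno
  have h1 : (((List.ofFn A).filterMap id : List U) : Multiset U).card = m := by
    rw [Multiset.coe_card, length_filterMap_of_all_some]
    · simp
    · intro o ho
      obtain ⟨i, hi⟩ := List.mem_ofFn.mp ho
      rw [← hi]; exact hno i
  have h2 : (elemsOf A).card = q.card := by rw [hstore]; rfl
  rw [show elemsOf A = (((List.ofFn A).filterMap id : List U) : Multiset U) from rfl,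
    h1] at h2
  omega

lemma pred_occupied {p : Fin m → U → U → Prop} {h : U → Fin m}
    (hm : 2 ≤ m) (hirr : ∀ i : Fin m, ∀ a : U, ¬ p i a a)
    (hstore : elemsOf A = q.val) (hinv : GenInv p h A) {i : Fin m} {v : U}
    (hA : A i = some v) (hne : h v ≠ i) :
    ∃ w, A (i - 1) = some w ∧ w ≠ v ∧ w ∈ q := by
  have hlt : cdist (h v) (i - 1) < cdist (h v) i := by
    have h1 : cdist (h v) ((i - 1) + 1) = cdist (h v) (i - 1) + 1 :=
      cdist_succ (by rw [sub_add_cancel]; exact fun hh => hne hh.symm)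
    rw [sub_add_cancel] at h1
    omega
  rcases hinv i v hA (i - 1) hlt with H | H
  · cases hAw : A (i - 1) with
    | none => rw [hAw] at H; simp [oGTp] at H
    | some w =>
      refine ⟨w, rfl, ?_, mem_of_cell hstore hAw⟩
      rw [hAw] at H
      intro hh
      subst hh
      exact hirr _ w H
  · exact absurd (cell_inj hstore H hA) (fpred_ne hm i)

end StoreLemmas

end AgeAux

open AgeAux

theorem stmt19 {U : Type*} [DecidableEq U] {m : ℕ} [NeZero m]
    (h : U → Fin m) (p : Fin m → U → U → Prop)
    -- each p i is a strict total order on U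
    (hirr : ∀ i : Fin m, ∀ a : U, ¬ p i a a)
    (htrans : ∀ i : Fin m, ∀ a b c : U, p i a b → p i b c → p i a c)
    (htotal : ∀ i : Fin m, ∀ a b : U, a ≠ b → p i a b ∨ p i b a)
    -- the canonical assignment induced by h and the priorities p
    (can : Finset U → Fin m → Option U)
    (hcanInv : ∀ q : Finset U, q.card + 1 ≤ m → GenInv p h (can q))
    (hcanStore : ∀ q : Finset U, q.card + 1 ≤ m → elemsOf (can q) = q.val)
    -- linearity: upon insertion, every element moves forward by at most one cell
    (hlinear : ∀ (q : Finset U) (v : U), v ∉ q → q.card + 2 ≤ m →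
      ∀ v' ∈ q, ∀ i j : Fin m,
        can q i = some v' → can (insert v q) j = some v' → cdist i j ≤ 1) :
    -- conclusion: the age rule on adjacent occupied cells
    ∀ q : Finset U, q.card + 1 ≤ m → ∀ (i : Fin m) (u v : U),
      can q i = some u → can q (i + 1) = some v → h v ≠ i + 1 →
      rnk h v i ≤ rnk h u i := by
  -- the key claim, proved by strong induction on the cardinality of `q`
  have key : ∀ n : ℕ, ∀ q : Finset U, q.card ≤ n → q.card + 1 ≤ m →
      ∀ (i : Fin m) (u v : U), can q i = some u → can q (i + 1) = some v →
      h v ≠ i + 1 → cdist (h u) i < cdist (h v) i → False := by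
    intro n
    induction n with
    | zero =>
      intro q hq0 hqm i u v hu _ _ _
      have hmem := mem_of_cell (hcanStore q hqm) hu
      rw [Finset.card_eq_zero.mp (Nat.le_zero.mp hq0)] at hmem
      simp at hmem
    | succ n IH =>
      intro q hqn hqm i u v hu hv hvne hviol
      have hstq := hcanStore q hqm
      have hm2 : 2 ≤ m := by
        have := cdist_lt (h v) i
        omega
      have humem : u ∈ q := mem_of_cell hstq hu
      have hvmem : v ∈ q := mem_of_cell hstq hv
      have huv : u ≠ v := by
        intro hh
        subst hh
        exact fsucc_ne hm2 i (cell_inj hstq hv hu)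
      have hq2 : 2 ≤ q.card := Finset.one_lt_card.mpr ⟨u, humem, v, hvmem, huv⟩
      have hm3 : 3 ≤ m := by omega
      have hvi : h v ≠ i := by
        intro hh
        rw [hh, cdist_self] at hviol
        omega
      -- q' = q minus u
      set q' := q.erase u with hq'def
      have hq'card : q'.card = q.card - 1 := Finset.card_erase_of_mem humem
      have hins : insert u q' = q := Finset.insert_erase humem
      have hust : u ∉ q' := Finset.notMem_erase u q
      have hstq' := hcanStore q' (by omega)
      have hinvq' := hcanInv q' (by omega)
      have hvq'mem : v ∈ q' := Finset.mem_erase.mpr ⟨Ne.symm huv, hvmem⟩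
      -- v sits at cell i in can q'
      have hvq' : can q' i = some v := by
        obtain ⟨j, hj⟩ := exists_cell hstq' hvq'mem
        have hlin1 : cdist j (i+1) ≤ 1 :=
          hlinear q' u hust (by omega) v hvq'mem j (i+1) hj (by rw [hins]; exact hv)
        rcases cdist_le_one hm2 hlin1 with hh | hh
        · -- j = i + 1 : impossible
          exfalso
          rw [← hh] at hj
          obtain ⟨w, hw, hwv, hwq'⟩ := pred_occupied hm2 hirr hstq' hinvq' hj hvne
          rw [add_sub_cancel_right] at hw
          obtain ⟨k, hk⟩ := exists_cell hstq (Finset.mem_of_mem_erase hwq')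
          have hlin2 : cdist i k ≤ 1 :=
            hlinear q' u hust (by omega) w hwq' i k hw (by rw [hins]; exact hk)
          rcases cdist_le_one hm2 hlin2 with hh2 | hh2
          · rw [hh2] at hk
            rw [hk] at hu
            exact hust (Option.some.inj hu ▸ hwq')
          · rw [hh2] at hk
            rw [hk] at hv
            exact hwv (Option.some.inj hv)
        · have : i = j := by
            have := hh
            exact add_right_cancel this
          rw [← this] at hj
          exact hj
      -- w = the occupant of cell i-1 in can q'
      obtain ⟨w, hw, hwv, hwq'⟩ := pred_occupied hm2 hirr hstq' hinvq' hvq' hvi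
      have hwq : w ∈ q := Finset.mem_of_mem_erase hwq'
      have hwu : w ≠ u := by
        intro hh
        rw [hh] at hwq'
        exact hust hwq'
      -- w also sits at cell i-1 in can q
      have hwcanq : can q (i-1) = some w := by
        obtain ⟨k, hk⟩ := exists_cell hstq hwq
        have hlin3 : cdist (i-1) k ≤ 1 :=
          hlinear q' u hust (by omega) w hwq' (i-1) k hw (by rw [hins]; exact hk)
        rcases cdist_le_one hm2 hlin3 with hh | hh
        · rw [hh] at hk; exact hk
        · exfalso
          rw [hh, sub_add_cancel] at hk
          rw [hk] at hu
          exact hwu (Option.some.inj hu)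
      -- t = q minus u and w
      set t := q'.erase w with htdef
      have htcard : t.card = q'.card - 1 := Finset.card_erase_of_mem hwq'
      have hins2 : insert w t = q' := Finset.insert_erase hwq'
      have hwt : w ∉ t := Finset.notMem_erase w q'
      have hvt_mem : v ∈ t := Finset.mem_erase.mpr ⟨Ne.symm hwv, hvq'mem⟩
      have hut : u ∉ t := fun hh => hust (Finset.mem_of_mem_erase hh)
      have hstt := hcanStore t (by omega)
      have hinvt := hcanInv t (by omega)
      -- v sits at cell i-1 in can t
      have hvt : can t (i-1) = some v := by
        obtain ⟨j2, hj2⟩ := exists_cell hstt hvt_mem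
        have hlin4 : cdist j2 i ≤ 1 :=
          hlinear t w hwt (by omega) v hvt_mem j2 i hj2 (by rw [hins2]; exact hvq')
        rcases cdist_le_one hm2 hlin4 with hh | hh
        · -- j2 = i : impossible
          exfalso
          rw [← hh] at hj2
          obtain ⟨y, hy, hyv, hyt⟩ := pred_occupied hm2 hirr hstt hinvt hj2 hvi
          obtain ⟨k2, hk2⟩ := exists_cell hstq' (Finset.mem_of_mem_erase hyt)
          have hlin5 : cdist (i-1) k2 ≤ 1 :=
            hlinear t w hwt (by omega) y hyt (i-1) k2 hy (by rw [hins2]; exact hk2)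
          rcases cdist_le_one hm2 hlin5 with hh2 | hh2
          · rw [hh2] at hk2
            rw [hk2] at hw
            have : y = w := Option.some.inj hw
            rw [this] at hyt
            exact hwt hyt
          · rw [hh2, sub_add_cancel] at hk2
            rw [hk2] at hvq'
            exact hyv (Option.some.inj hvq'.symm).symm
        · -- i = j2 + 1, so j2 = i - 1
          have : j2 = i - 1 := by
            rw [hh]; rw [add_sub_cancel_right]
          rw [← this]
          exact hj2
      -- r = t plus u = q minus w
      set r := insert u t with hrdef
      have hrcard : r.card = t.card + 1 := Finset.card_insert_of_notMem hut
      have hwr : w ∉ r := by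
        rw [hrdef, Finset.mem_insert]
        push_neg
        exact ⟨hwu, hwt⟩
      have hinsr : insert w r = q := by
        rw [hrdef, Finset.insert_comm, hins2, hins]
      have hstr := hcanStore r (by omega)
      have hinvr := hcanInv r (by omega)
      have hvr_mem : v ∈ r := Finset.mem_insert_of_mem hvt_mem
      -- v sits at cell i in can r
      have hvr : can r i = some v := by
        obtain ⟨j3, hj3⟩ := exists_cell hstr hvr_mem
        have h31 : cdist (i-1) j3 ≤ 1 :=
          hlinear t u hut (by omega) v hvt_mem (i-1) j3 hvt hj3
        have h32 : cdist j3 (i+1) ≤ 1 :=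
          hlinear r w hwr (by omega) v hvr_mem j3 (i+1) hj3 (by rw [hinsr]; exact hv)
        rcases cdist_le_one hm2 h31 with hh | hh
        · exfalso
          rcases cdist_le_one hm2 h32 with hh2 | hh2
          · rw [hh] at hh2
            exact fpred_ne_succ hm3 i hh2.symm
          · rw [hh, sub_add_cancel] at hh2
            exact fsucc_ne hm2 i hh2
        · rw [hh, sub_add_cancel] at hj3
          exact hj3
      -- u sits at cell i-1 in can r
      have hur : can r (i-1) = some u := by
        obtain ⟨j4, hj4⟩ := exists_cell hstr (Finset.mem_insert_self u t)
        have h41 : cdist j4 i ≤ 1 :=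
          hlinear r w hwr (by omega) u (Finset.mem_insert_self u t) j4 i hj4
            (by rw [hinsr]; exact hu)
        rcases cdist_le_one hm2 h41 with hh | hh
        · exfalso
          rw [← hh] at hj4
          rw [hj4] at hvr
          exact huv (Option.some.inj hvr)
        · have : j4 = i - 1 := by
            rw [hh]; rw [add_sub_cancel_right]
          rw [← this]
          exact hj4
      by_cases hhu : h u = i
      · -- base case: u is maximally displaced in can r, but there is an empty cell
        obtain ⟨j0, hj0⟩ := exists_empty_cell hstr (by omega)
        have hj0ne : j0 ≠ i - 1 := by
          intro hh
          rw [hh, hur] at hj0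
          simp at hj0
        have hlt : cdist (h u) j0 < cdist (h u) (i-1) := by
          rw [hhu, cdist_pred_max hm2]
          have h1 : cdist i j0 < m := cdist_lt _ _
          have h2 : cdist i j0 ≠ m - 1 := by
            intro hh
            apply hj0ne
            apply cdist_inj (a := i)
            rw [hh, cdist_pred_max hm2]
          omega
        rcases hinvr (i-1) u hur j0 hlt with H | H
        · rw [hj0] at H
          simp [oGTp] at H
        · rw [hj0] at H
          simp at H
      · -- inductive step: the same violation pattern occurs in r at cell i-1
        apply IH r (by omega) (by omega) (i-1) u v hur
          (by rw [sub_add_cancel]; exact hvr)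
          (by rw [sub_add_cancel]; exact hvi)
        have e1 : cdist (h u) i = cdist (h u) (i-1) + 1 := by
          have := cdist_succ (a := h u) (b := i - 1)
            (by rw [sub_add_cancel]; exact fun hh => hhu hh.symm)
          rw [sub_add_cancel] at this
          exact this
        have e2 : cdist (h v) i = cdist (h v) (i-1) + 1 := by
          have := cdist_succ (a := h v) (b := i - 1)
            (by rw [sub_add_cancel]; exact fun hh => hvi hh.symm)
          rw [sub_add_cancel] at this
          exact this
        omega
  intro q hq i u v hu hv hne
  by_contra hcon
  push_neg at hcon
  exact key q.card q le_rfl hq i u v hu hv hne hcon
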